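/- arXiv:2410.20032 — 2 statements merged into one kernel-verified Lean document; each statement's English description precedes it below -/
import Mathlib

section
/- Let T > 0, k > 0, and let θ : [0,T] × ℝ → ℝ be twice continuously differentiable. Assume: (i) whenever (t,y) ∈ [0,T]×[−k,k] satisfies θ(t,y) = 0 and ∂_yθ(t,y) = 0, one has ∂_tθ(t,y) ≠ 0; and (ii) there is no (t,y) ∈ [0,T]×[−k,k] with θ(t,y) = 0, ∂_yθ(t,y) = 0 and ∂²_{yy}θ(t,y) = 0. Then the set { (t,y) ∈ [0,T]×[−k,k] : θ(t,y) = 0 and ∂_yθ(t,y) = 0 } is finite. -/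
open Set

private lemma slice_y {f : ℝ × ℝ → ℝ} (hf : Differentiable ℝ f) (a b : ℝ) :
    HasDerivAt (fun y => f (a, y)) (fderiv ℝ f (a, b) (0, 1)) b := by
  have h1 : HasDerivAt (fun y : ℝ => ((a, y) : ℝ × ℝ)) ((0 : ℝ), (1 : ℝ)) b :=
    (hasDerivAt_const b a).prodMk (hasDerivAt_id b)
  exact (hf (a, b)).hasFDerivAt.comp_hasDerivAt b h1

private lemma slice_t {f : ℝ × ℝ → ℝ} (hf : Differentiable ℝ f) (a b : ℝ) :
    HasDerivAt (fun t => f (t, b)) (fderiv ℝ f (a, b) (1, 0)) a := by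
  have h1 : HasDerivAt (fun t : ℝ => ((t, b) : ℝ × ℝ)) ((1 : ℝ), (0 : ℝ)) a :=
    (hasDerivAt_id a).prodMk (hasDerivAt_const a b)
  exact (hf (a, b)).hasFDerivAt.comp_hasDerivAt a h1

/-- If `θ` is `C²`, every solution of `θ = ∂_yθ = 0` in `[0,T]×[−k,k]` has `∂_tθ ≠ 0`,
and the system `θ = ∂_yθ = ∂²_{yy}θ = 0` has no solution in `[0,T]×[−k,k]`, then
the set of solutions of `θ = ∂_yθ = 0` in `[0,T]×[−k,k]` is finite. -/
theorem stmt_5 (T k : ℝ) (hT : 0 < T) (hk : 0 < k)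
    (θ : ℝ × ℝ → ℝ) (hθ : ContDiff ℝ 2 θ)
    (h1 : ∀ p ∈ Icc (0:ℝ) T ×ˢ Icc (-k) k,
      θ p = 0 → deriv (fun y => θ (p.1, y)) p.2 = 0 →
        deriv (fun t => θ (t, p.2)) p.1 ≠ 0)
    (h2 : ¬ ∃ p ∈ Icc (0:ℝ) T ×ˢ Icc (-k) k,
      θ p = 0 ∧ deriv (fun y => θ (p.1, y)) p.2 = 0 ∧
        deriv (fun y => deriv (fun y' => θ (p.1, y')) y) p.2 = 0) :
    {p : ℝ × ℝ | p ∈ Icc (0:ℝ) T ×ˢ Icc (-k) k ∧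
      θ p = 0 ∧ deriv (fun y => θ (p.1, y)) p.2 = 0}.Finite := by
  push_neg at h2
  set K : Set (ℝ × ℝ) := Icc (0:ℝ) T ×ˢ Icc (-k) k with hK
  set g : ℝ × ℝ → ℝ := fun p => fderiv ℝ θ p (0, 1) with hg
  have hθd : Differentiable ℝ θ := hθ.differentiable (by norm_num)
  have hg_cd : ContDiff ℝ 1 g :=
    (hθ.fderiv_right (by norm_num)).clm_apply contDiff_const
  have hgd : Differentiable ℝ g := hg_cd.differentiable one_ne_zero
  have gA : ∀ p : ℝ × ℝ, deriv (fun y => θ (p.1, y)) p.2 = g p := by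
    intro p
    have := (slice_y hθd p.1 p.2).deriv
    simpa [hg] using this
  have gB : ∀ p : ℝ × ℝ, deriv (fun y => deriv (fun y' => θ (p.1, y')) y) p.2
      = fderiv ℝ g p (0, 1) := by
    intro p
    have hfun : (fun y => deriv (fun y' => θ (p.1, y')) y) = fun y => g (p.1, y) := by
      funext y
      exact gA (p.1, y)
    rw [hfun]
    have := (slice_y hgd p.1 p.2).deriv
    simpa using this
  set S : Set (ℝ × ℝ) := {p : ℝ × ℝ | p ∈ K ∧ θ p = 0 ∧
      deriv (fun y => θ (p.1, y)) p.2 = 0} with hS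
  have hSg : S = {p : ℝ × ℝ | p ∈ K ∧ θ p = 0 ∧ g p = 0} := by
    ext p; simp only [hS, mem_setOf_eq, gA p]
  -- S is compact
  have hScl : IsClosed S := by
    rw [hSg]
    have : {p : ℝ × ℝ | p ∈ K ∧ θ p = 0 ∧ g p = 0}
        = K ∩ (θ ⁻¹' {0} ∩ g ⁻¹' {0}) := by
      ext p; simp only [mem_setOf_eq, mem_inter_iff, mem_preimage, mem_singleton_iff, and_assoc]
    rw [this]
    exact ((isClosed_Icc.prod isClosed_Icc).inter
      ((isClosed_singleton.preimage hθd.continuous).inter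
        (isClosed_singleton.preimage hgd.continuous)))
  have hScpt : IsCompact S := by
    refine IsCompact.of_isClosed_subset
      ((isCompact_Icc : IsCompact (Icc (0:ℝ) T)).prod (isCompact_Icc : IsCompact (Icc (-k) k)))
      hScl ?_
    intro p hp; exact hp.1
  -- every point of S is isolated
  have hiso : ∀ p ∈ S, ∃ U : Set (ℝ × ℝ), IsOpen U ∧ p ∈ U ∧ U ∩ S ⊆ {p} := by
    intro p hp
    obtain ⟨hpK, hp0, hpy⟩ := hp
    have hgp : g p = 0 := (gA p) ▸ hpy
    -- a ≠ 0
    have ha : fderiv ℝ θ p (1, 0) ≠ 0 := by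
      have := h1 p hpK hp0 hpy
      have ht := (slice_t hθd p.1 p.2).deriv
      simp only [Prod.mk.eta] at ht
      rwa [ht] at this
    have hc : fderiv ℝ g p (0, 1) ≠ 0 := by
      have := h2 p hpK hp0 hpy
      rwa [gB p] at this
    set F : ℝ × ℝ → ℝ × ℝ := fun q => (θ q, g q) with hF
    set F' : ℝ × ℝ →L[ℝ] ℝ × ℝ := (fderiv ℝ θ p).prod (fderiv ℝ g p) with hF'
    have hstrict : HasStrictFDerivAt F F' p :=
      HasStrictFDerivAt.prodMk (hθ.contDiffAt.hasStrictFDerivAt (by norm_num))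
        (hg_cd.contDiffAt.hasStrictFDerivAt one_ne_zero)
    -- F' injective
    have hinj : Function.Injective F'.toLinearMap := by
      rw [injective_iff_map_eq_zero']
      intro v
      constructor
      · intro hv
        have hv1 : fderiv ℝ θ p v = 0 := congrArg Prod.fst hv
        have hv2 : fderiv ℝ g p v = 0 := congrArg Prod.snd hv
        have hvdec : v = v.1 • ((1:ℝ), (0:ℝ)) + v.2 • ((0:ℝ), (1:ℝ)) := by
          ext <;> simp
        rw [hvdec, map_add, map_smul, map_smul] at hv1 hv2
        have hθ01 : fderiv ℝ θ p (0, 1) = 0 := hgp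
        rw [hθ01] at hv1
        simp only [smul_eq_mul, mul_zero, add_zero] at hv1
        have hv1' : v.1 = 0 := by
          rcases mul_eq_zero.mp hv1 with h | h
          · exact h
          · exact absurd h ha
        rw [hv1'] at hv2
        simp only [zero_smul, map_zero, zero_add, smul_eq_mul, zero_mul, zero_add] at hv2
        have hv2' : v.2 = 0 := by
          rcases mul_eq_zero.mp hv2 with h | h
          · exact h
          · exact absurd h hc
        ext <;> simp [hv1', hv2']
      · intro hv; rw [hv]; simp
    have hsurj : Function.Surjective F'.toLinearMap :=
      LinearMap.injective_iff_surjective.mp hinj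
    let e : (ℝ × ℝ) ≃ₗ[ℝ] (ℝ × ℝ) := LinearEquiv.ofBijective F'.toLinearMap ⟨hinj, hsurj⟩
    let eC : (ℝ × ℝ) ≃L[ℝ] (ℝ × ℝ) := e.toContinuousLinearEquiv
    have heC : (eC : ℝ × ℝ →L[ℝ] ℝ × ℝ) = F' := by
      ext v <;> rfl
    have hstrict' : HasStrictFDerivAt F (eC : ℝ × ℝ →L[ℝ] ℝ × ℝ) p := heC ▸ hstrict
    let φ := HasStrictFDerivAt.toOpenPartialHomeomorph F hstrict'
    refine ⟨φ.source, φ.open_source, HasStrictFDerivAt.mem_toOpenPartialHomeomorph_source hstrict', ?_⟩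
    rintro q ⟨hqU, hqS⟩
    have hFq : F q = F p := by
      rw [hSg] at hqS
      simp only [mem_setOf_eq] at hqS
      simp [hF, hqS.2.1, hqS.2.2, hp0, hgp]
    have : φ q = φ p := by
      have hcoe : (φ : ℝ × ℝ → ℝ × ℝ) = F := HasStrictFDerivAt.toOpenPartialHomeomorph_coe hstrict'
      simp [hcoe, hFq]
    exact φ.injOn hqU (HasStrictFDerivAt.mem_toOpenPartialHomeomorph_source hstrict') this
  -- extract finite subcover
  choose! U hUopen hUmem hUsub using hiso
  have hcover : S ⊆ ⋃ p ∈ S, U p := fun q hq => mem_biUnion hq (hUmem q hq)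
  obtain ⟨b, hbS, hbfin, hbcov⟩ :=
    hScpt.elim_finite_subcover_image (fun p hp => hUopen p hp) hcover
  refine hbfin.subset ?_
  intro q hq
  obtain ⟨p, hpb, hqU⟩ := mem_iUnion₂.mp (hbcov hq)
  have : q ∈ ({p} : Set (ℝ × ℝ)) := hUsub p (hbS hpb) ⟨hqU, hq⟩
  rw [mem_singleton_iff] at this
  exact this ▸ hpb
end

section
/- Let 0 ≤ τ < t₁ and P ≥ 0. Let p, r : [τ,t₁] → ℝ be measurable with |p(t)| ≤ P for all t, and r integrable with r(t) ≥ 0 for almost every t. Let w : [τ,t₁] → ℝ be Lipschitz with w(τ) = 0 and w'(t) = −p(t)·w(t) − r(t) for almost every t ∈ [τ,t₁]. Then for every t ∈ [τ,t₁], w(t) ≤ −e^{−P(t−τ)}·∫_τ^t r(s) ds ≤ 0. -/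
open MeasureTheory Set intervalIntegral Filter Topology

private lemma seq_tendsto_slope {f : ℝ → ℝ} {x l : ℝ} (hf : HasDerivAt f l x) :
    Tendsto (fun n : ℕ => (f (x + ((n : ℝ) + 1)⁻¹) - f x) * ((n : ℝ) + 1)) atTop (𝓝 l) := by
  rw [hasDerivAt_iff_tendsto_slope] at hf
  have h0 : Tendsto (fun n : ℕ => x + ((n : ℝ) + 1)⁻¹) atTop (𝓝[≠] x) := by
    apply tendsto_nhdsWithin_of_tendsto_nhds_of_eventually_within
    · have h1 := tendsto_one_div_add_atTop_nhds_zero_nat (𝕜 := ℝ)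
      have := tendsto_const_nhds.add (f := fun _ : ℕ => x) h1
      simpa [one_div] using this
    · refine Eventually.of_forall fun n => ?_
      have : (0:ℝ) < ((n:ℝ)+1)⁻¹ := by positivity
      simp only [mem_compl_iff, mem_singleton_iff]
      linarith
  have h2 := hf.comp h0
  refine h2.congr fun n => ?_
  rw [Function.comp_apply, slope_def_field]
  rw [add_sub_cancel_left]; field_simp

private lemma lip_ftc_global {K : NNReal} {g D : ℝ → ℝ} (hg : LipschitzWith K g)
    {a b : ℝ} (hab : a ≤ b)
    (hD : ∀ᵐ x ∂(volume.restrict (Ioo a b)), HasDerivAt g (D x) x) :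
    (∫ x in Ioo a b, D x) = g b - g a ∧ IntegrableOn D (Ioo a b) := by
  set μ := volume.restrict (Ioo a b) with hμ
  have hfin : IsFiniteMeasure μ := ⟨by
    rw [hμ, Measure.restrict_apply_univ]; exact measure_Ioo_lt_top⟩
  set F : ℕ → ℝ → ℝ := fun n x => (g (x + ((n : ℝ) + 1)⁻¹) - g x) * ((n : ℝ) + 1) with hF
  have hFcont : ∀ n, Continuous (F n) := fun n =>
    ((hg.continuous.comp (continuous_id.add continuous_const)).sub hg.continuous).mul
      continuous_const
  have hFmeas : ∀ n, AEStronglyMeasurable (F n) μ := fun n => (hFcont n).aestronglyMeasurable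
  have hlim : ∀ᵐ x ∂μ, Tendsto (fun n => F n x) atTop (𝓝 (D x)) := by
    filter_upwards [hD] with x hx using seq_tendsto_slope hx
  have hboundpt : ∀ n x, ‖F n x‖ ≤ (K : ℝ) := by
    intro n x
    have hn : (0:ℝ) < (n:ℝ) + 1 := by positivity
    have h1 : dist (g (x + ((n:ℝ)+1)⁻¹)) (g x) ≤ K * dist (x + ((n:ℝ)+1)⁻¹) x :=
      hg.dist_le_mul _ _
    rw [Real.dist_eq, Real.dist_eq, add_sub_cancel_left, abs_of_pos (inv_pos.2 hn)] at h1
    rw [Real.norm_eq_abs, hF]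
    simp only
    rw [abs_mul, abs_of_pos hn]
    calc |g (x + ((n:ℝ)+1)⁻¹) - g x| * ((n:ℝ)+1)
        ≤ ((K:ℝ) * ((n:ℝ)+1)⁻¹) * ((n:ℝ)+1) := by
          exact mul_le_mul_of_nonneg_right h1 hn.le
      _ = (K:ℝ) := by field_simp
  have hbound : ∀ n, ∀ᵐ x ∂μ, ‖F n x‖ ≤ (K : ℝ) := fun n =>
    Eventually.of_forall (hboundpt n)
  have hDmeas : AEStronglyMeasurable D μ :=
    (aemeasurable_of_tendsto_metrizable_ae _
      (fun n => (hFcont n).measurable.aemeasurable) hlim).aestronglyMeasurable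
  have hDle : ∀ᵐ x ∂μ, ‖D x‖ ≤ (K : ℝ) := by
    filter_upwards [hlim] with x hx
    exact le_of_tendsto hx.norm (Eventually.of_forall fun n => hboundpt n x)
  have hDint : Integrable D μ :=
    Integrable.mono' (integrable_const (K:ℝ)) hDmeas hDle
  have hconv : Tendsto (fun n => ∫ x, F n x ∂μ) atTop (𝓝 (∫ x, D x ∂μ)) :=
    tendsto_integral_of_dominated_convergence _ hFmeas (integrable_const _) hbound hlim
  set G : ℝ → ℝ := fun u => ∫ t in a..u, g t with hG
  have hGd : ∀ u, HasDerivAt G (g u) u := fun u =>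
    intervalIntegral.integral_hasDerivAt_right (hg.continuous.intervalIntegrable _ _)
      (hg.continuous.stronglyMeasurableAtFilter _ _) hg.continuous.continuousAt
  have hInt : ∀ n, (∫ x, F n x ∂μ) =
      (G (b + ((n:ℝ)+1)⁻¹) - G b) * ((n:ℝ)+1) - (G (a + ((n:ℝ)+1)⁻¹) - G a) * ((n:ℝ)+1) := by
    intro n
    set c : ℝ := ((n:ℝ)+1)⁻¹ with hc
    have h1 : (∫ x, F n x ∂μ) = ∫ x in a..b, F n x := by
      rw [hμ, intervalIntegral.integral_of_le hab, ← integral_Ioc_eq_integral_Ioo]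
    rw [h1, hF]
    simp only
    rw [intervalIntegral.integral_mul_const]
    have h2 : (∫ x in a..b, (g (x + c) - g x)) =
        (∫ x in a..b, g (x + c)) - ∫ x in a..b, g x := by
      exact intervalIntegral.integral_sub
        ((hg.continuous.comp (continuous_id.add continuous_const)).intervalIntegrable _ _)
        (hg.continuous.intervalIntegrable _ _)
    rw [h2, intervalIntegral.integral_comp_add_right]
    have h3 : (∫ x in (a+c)..(b+c), g x) = G (b + c) - G (a + c) := by
      rw [hG]
      simp only
      rw [← intervalIntegral.integral_interval_sub_left
        (hg.continuous.intervalIntegrable _ _) (hg.continuous.intervalIntegrable _ _)]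
    have h4 : (∫ x in a..b, g x) = G b - G a := by
      rw [hG]; simp [intervalIntegral.integral_same]
    rw [h3, h4]; ring
  have hconv2 : Tendsto (fun n => ∫ x, F n x ∂μ) atTop (𝓝 (g b - g a)) := by
    simp only [hInt]
    exact (seq_tendsto_slope (hGd b)).sub (seq_tendsto_slope (hGd a))
  exact ⟨tendsto_nhds_unique hconv hconv2, hDint⟩

private lemma lip_ftc {K : NNReal} {g D : ℝ → ℝ} {a b : ℝ} (hab : a ≤ b)
    (hg : LipschitzOnWith K g (Icc a b))
    (hD : ∀ᵐ x ∂(volume.restrict (Ioo a b)), HasDerivAt g (D x) x) :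
    (∫ x in Ioo a b, D x) = g b - g a ∧ IntegrableOn D (Ioo a b) := by
  obtain ⟨G, hG, hEq⟩ := hg.extend_real
  have hD' : ∀ᵐ x ∂(volume.restrict (Ioo a b)), HasDerivAt G (D x) x := by
    filter_upwards [hD, ae_restrict_mem measurableSet_Ioo] with x hx hmem
    refine hx.congr_of_eventuallyEq ?_
    filter_upwards [Ioo_mem_nhds hmem.1 hmem.2] with y hy
    exact (hEq (Ioo_subset_Icc_self hy)).symm
  have h := lip_ftc_global hG hab hD'
  rwa [← hEq (left_mem_Icc.2 hab), ← hEq (right_mem_Icc.2 hab)] at h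

private lemma lip_mul {f g : ℝ → ℝ} {s : Set ℝ} {Kf Kg C : NNReal}
    (hf : LipschitzOnWith Kf f s) (hg : LipschitzOnWith Kg g s)
    (hfb : ∀ x ∈ s, |f x| ≤ (C : ℝ)) (hgb : ∀ x ∈ s, |g x| ≤ (C : ℝ)) :
    LipschitzOnWith (C * Kg + C * Kf) (fun x => f x * g x) s := by
  rw [lipschitzOnWith_iff_dist_le_mul] at hf hg ⊢
  intro x hx y hy
  have h1 := hf x hx y hy
  have h2 := hg x hx y hy
  rw [Real.dist_eq] at h1 h2 ⊢
  rw [Real.dist_eq] at *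
  have key : f x * g x - f y * g y = f x * (g x - g y) + (f x - f y) * g y := by ring
  calc |f x * g x - f y * g y| = |f x * (g x - g y) + (f x - f y) * g y| := by rw [key]
    _ ≤ |f x * (g x - g y)| + |(f x - f y) * g y| := abs_add_le _ _
    _ = |f x| * |g x - g y| + |f x - f y| * |g y| := by rw [abs_mul, abs_mul]
    _ ≤ (C : ℝ) * ((Kg : ℝ) * |x - y|) + (Kf : ℝ) * |x - y| * (C : ℝ) :=
        add_le_add
          (mul_le_mul (hfb x hx) h2 (abs_nonneg _) C.coe_nonneg)
          (mul_le_mul h1 (hgb y hy) (abs_nonneg _) (by positivity))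
    _ = ((C * Kg + C * Kf : NNReal) : ℝ) * |x - y| := by push_cast; ring

private lemma lip_exp {c a b M : ℝ} (hM : ∀ x ∈ Icc a b, |c| * Real.exp (c * x) ≤ M) :
    LipschitzOnWith M.toNNReal (fun x => Real.exp (c * x)) (Icc a b) := by
  refine (convex_Icc a b).lipschitzOnWith_of_nnnorm_hasDerivWithin_le
    (f' := fun x => Real.exp (c * x) * c) (fun x _ => ?_) (fun x hx => ?_)
  · have h1 : HasDerivAt (fun y : ℝ => c * y) c x := by
      simpa using (hasDerivAt_id x).const_mul c
    exact h1.exp.hasDerivWithinAt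
  · rw [← NNReal.coe_le_coe, coe_nnnorm, Real.coe_toNNReal', Real.norm_eq_abs, abs_mul,
      abs_of_pos (Real.exp_pos _)]
    exact le_max_of_le_left (by rw [mul_comm]; exact hM x hx)

/-- Exponential upper bound for the perturbation along a characteristic: if `w(τ) = 0` and
`w' = −p·w − r` a.e. with `|p| ≤ P` and `r ≥ 0` a.e., then
`w(t) ≤ −e^{−P(t−τ)} ∫_τ^t r ≤ 0` for every `t ∈ [τ,t₁]`. -/
theorem stmt_15 (τ t₁ P : ℝ) (hτ : 0 ≤ τ) (ht : τ < t₁) (hP : 0 ≤ P)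
    (p r : ℝ → ℝ) (hpmeas : Measurable p) (hrmeas : Measurable r)
    (hpb : ∀ t ∈ Icc τ t₁, |p t| ≤ P)
    (hrint : IntegrableOn r (Icc τ t₁))
    (hr0 : ∀ᵐ t ∂(volume.restrict (Icc τ t₁)), 0 ≤ r t)
    (w w' : ℝ → ℝ) (K : NNReal)
    (hwLip : LipschitzOnWith K w (Icc τ t₁))
    (hw0 : w τ = 0)
    (hwd : ∀ᵐ t ∂(volume.restrict (Icc τ t₁)), HasDerivAt w (w' t) t)
    (hweq : ∀ᵐ t ∂(volume.restrict (Icc τ t₁)), w' t = -(p t) * w t - r t) :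
    ∀ t ∈ Icc τ t₁,
      w t ≤ -(Real.exp (-(P * (t - τ)))) * ∫ s in τ..t, r s ∧ w t ≤ 0 := by
  have hwdist := lipschitzOnWith_iff_dist_le_mul.1 hwLip
  have hwB : ∀ s ∈ Icc τ t₁, |w s| ≤ (K : ℝ) * (t₁ - τ) := by
    intro s hs
    have h1 := hwdist s hs τ (left_mem_Icc.2 ht.le)
    rw [Real.dist_eq, Real.dist_eq, hw0, sub_zero] at h1
    refine h1.trans (mul_le_mul_of_nonneg_left ?_ K.coe_nonneg)
    rw [abs_of_nonneg (sub_nonneg.2 hs.1)]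
    linarith [hs.2]
  set C : NNReal := K * (t₁ - τ).toNNReal + (Real.exp (P * t₁)).toNNReal + 1 with hCdef
  have hnn1 : (0:ℝ) ≤ (K : ℝ) * ((t₁ - τ).toNNReal : ℝ) :=
    mul_nonneg K.coe_nonneg (t₁ - τ).toNNReal.coe_nonneg
  have hnn2 : (0:ℝ) ≤ (((Real.exp (P * t₁)).toNNReal : NNReal) : ℝ) := NNReal.coe_nonneg _
  have hC1 : (1 : ℝ) ≤ (C : ℝ) := by
    rw [hCdef]
    push_cast
    linarith
  have hCw : ∀ s ∈ Icc τ t₁, |w s| ≤ (C : ℝ) := by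
    intro s hs
    refine (hwB s hs).trans ?_
    push_cast [hCdef]
    rw [Real.coe_toNNReal _ (by linarith : (0:ℝ) ≤ t₁ - τ)]
    linarith
  have hCexp : ∀ s ∈ Icc τ t₁, |Real.exp (P * s)| ≤ (C : ℝ) := by
    intro s hs
    rw [abs_of_pos (Real.exp_pos _)]
    have h1 : Real.exp (P * s) ≤ Real.exp (P * t₁) :=
      Real.exp_le_exp.2 (mul_le_mul_of_nonneg_left hs.2 hP)
    push_cast [hCdef]
    rw [Real.coe_toNNReal _ (Real.exp_pos _).le]
    linarith
  have hCexpneg : ∀ s ∈ Icc τ t₁, |Real.exp (-P * s)| ≤ (C : ℝ) := by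
    intro s hs
    rw [abs_of_pos (Real.exp_pos _)]
    have h1 : Real.exp (-P * s) ≤ 1 := Real.exp_le_one_iff.2 (by nlinarith [hs.1])
    linarith
  -- Step 1 : w ≤ 0 on [τ, t₁]
  have key : ∀ u ∈ Icc τ t₁, w u ≤ 0 := by
    intro u hu
    by_contra hpos
    push_neg at hpos
    set S : Set ℝ := Icc τ u ∩ w ⁻¹' Iic 0 with hS
    have hSne : S.Nonempty := ⟨τ, left_mem_Icc.2 hu.1, by simp [hw0]⟩
    have hSb : BddAbove S := ⟨u, fun s hs => hs.1.2⟩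
    have hSclosed : IsClosed S :=
      (hwLip.continuousOn.mono (Icc_subset_Icc le_rfl hu.2)).preimage_isClosed_of_isClosed
        isClosed_Icc isClosed_Iic
    set σ := sSup S with hσdef
    have hσS : σ ∈ S := hSclosed.csSup_mem hSne hSb
    have hστ : τ ≤ σ := hσS.1.1
    have hσu : σ ≤ u := hσS.1.2
    have hwσ : w σ ≤ 0 := hσS.2
    have hσlt : σ < u := lt_of_le_of_ne hσu (fun h => by rw [h] at hwσ; linarith)
    have hposIoc : ∀ s ∈ Ioc σ u, 0 < w s := by
      intro s hs
      by_contra hns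
      push_neg at hns
      have hmem : s ∈ S := ⟨⟨hστ.trans hs.1.le, hs.2⟩, hns⟩
      exact absurd (le_csSup hSb hmem) (not_le.2 hs.1)
    have hsub : Ioo σ u ⊆ Icc τ t₁ := fun s hs =>
      ⟨hστ.trans hs.1.le, hs.2.le.trans hu.2⟩
    have hsubI : Icc σ u ⊆ Icc τ t₁ := Icc_subset_Icc hστ hu.2
    -- Lipschitz of s ↦ w s * exp(-P s) on [σ, u]
    have hElip : LipschitzOnWith P.toNNReal (fun x => Real.exp (-P * x)) (Icc σ u) := by
      refine lip_exp fun x hx => ?_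
      have hx0 : 0 ≤ x := hτ.trans (hστ.trans hx.1)
      rw [abs_of_nonpos (by linarith : -P ≤ 0)]
      have : Real.exp (-P * x) ≤ 1 := Real.exp_le_one_iff.2 (by nlinarith)
      nlinarith
    have hhlip : LipschitzOnWith (C * P.toNNReal + C * K)
        (fun s => w s * Real.exp (-P * s)) (Icc σ u) :=
      lip_mul (hwLip.mono hsubI) hElip (fun x hx => hCw x (hsubI hx))
        (fun x hx => hCexpneg x (hsubI hx))
    -- a.e. derivative
    have hwd2 := ae_restrict_of_ae_restrict_of_subset hsub hwd
    have hweq2 := ae_restrict_of_ae_restrict_of_subset hsub hweq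
    have hr02 := ae_restrict_of_ae_restrict_of_subset hsub hr0
    have hDer : ∀ᵐ s ∂(volume.restrict (Ioo σ u)),
        HasDerivAt (fun y => w y * Real.exp (-P * y))
          ((w' s - P * w s) * Real.exp (-P * s)) s := by
      filter_upwards [hwd2] with s hs
      have h1 : HasDerivAt (fun y : ℝ => -P * y) (-P) s := by
        simpa using (hasDerivAt_id s).const_mul (-P)
      have h2 : HasDerivAt (fun y => w y * Real.exp (-P * y)) _ s := hs.mul h1.exp
      convert h2 using 1
      ring
    obtain ⟨heq, hint⟩ := lip_ftc hσlt.le hhlip hDer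
    have hDle : ∀ᵐ s ∂(volume.restrict (Ioo σ u)),
        (w' s - P * w s) * Real.exp (-P * s) ≤ 0 := by
      filter_upwards [hweq2, hr02, ae_restrict_mem measurableSet_Ioo] with s hseq hsr hsmem
      have hsI : s ∈ Icc τ t₁ := hsub hsmem
      have hp := hpb s hsI
      have hws : 0 < w s := hposIoc s (Ioo_subset_Ioc_self hsmem)
      have h3 : w' s - P * w s ≤ 0 := by
        rw [hseq]
        have hpP : 0 ≤ p s + P := by
          have := abs_le.1 hp
          linarith [this.1]
        nlinarith
      exact mul_nonpos_of_nonpos_of_nonneg h3 (Real.exp_pos _).le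
    have hneg : (∫ s in Ioo σ u, (w' s - P * w s) * Real.exp (-P * s)) ≤ 0 :=
      integral_nonpos_of_ae hDle
    rw [heq] at hneg
    have h4 : w σ * Real.exp (-P * σ) ≤ 0 :=
      mul_nonpos_of_nonpos_of_nonneg hwσ (Real.exp_pos _).le
    have h5 : 0 < w u * Real.exp (-P * u) := mul_pos hpos (Real.exp_pos _)
    linarith
  -- Step 2 : quantitative bound
  intro t htI
  refine ⟨?_, key t htI⟩
  have hsub : Ioo τ t ⊆ Icc τ t₁ := fun s hs => ⟨hs.1.le, hs.2.le.trans htI.2⟩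
  have hsubI : Icc τ t ⊆ Icc τ t₁ := Icc_subset_Icc le_rfl htI.2
  have hElip : LipschitzOnWith (P * Real.exp (P * t₁)).toNNReal
      (fun x => Real.exp (P * x)) (Icc τ t) := by
    refine lip_exp fun x hx => ?_
    have h1 : Real.exp (P * x) ≤ Real.exp (P * t₁) :=
      Real.exp_le_exp.2 (mul_le_mul_of_nonneg_left (hx.2.trans htI.2) hP)
    rw [abs_of_nonneg hP]
    nlinarith [Real.exp_pos (P * x)]
  have hhlip : LipschitzOnWith (C * (P * Real.exp (P * t₁)).toNNReal + C * K)
      (fun s => w s * Real.exp (P * s)) (Icc τ t) :=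
    lip_mul (hwLip.mono hsubI) hElip (fun x hx => hCw x (hsubI hx))
      (fun x hx => hCexp x (hsubI hx))
  have hwd2 := ae_restrict_of_ae_restrict_of_subset hsub hwd
  have hweq2 := ae_restrict_of_ae_restrict_of_subset hsub hweq
  have hr02 := ae_restrict_of_ae_restrict_of_subset hsub hr0
  have hDer : ∀ᵐ s ∂(volume.restrict (Ioo τ t)),
      HasDerivAt (fun y => w y * Real.exp (P * y))
        ((w' s + P * w s) * Real.exp (P * s)) s := by
    filter_upwards [hwd2] with s hs
    have h1 : HasDerivAt (fun y : ℝ => P * y) P s := by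
      simpa using (hasDerivAt_id s).const_mul P
    have h2 : HasDerivAt (fun y => w y * Real.exp (P * y)) _ s := hs.mul h1.exp
    convert h2 using 1
    ring
  obtain ⟨heq, hint⟩ := lip_ftc htI.1 hhlip hDer
  have hDle : ∀ᵐ s ∂(volume.restrict (Ioo τ t)),
      (w' s + P * w s) * Real.exp (P * s) ≤ -Real.exp (P * τ) * r s := by
    filter_upwards [hweq2, hr02, ae_restrict_mem measurableSet_Ioo] with s hseq hsr hsmem
    have hsI : s ∈ Icc τ t₁ := hsub hsmem
    have hp := hpb s hsI
    have hws : w s ≤ 0 := key s hsI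
    have h3 : w' s + P * w s ≤ -r s := by
      rw [hseq]
      have hPp : 0 ≤ P - p s := by
        have := abs_le.1 hp
        linarith [this.2]
      nlinarith
    have h4 : (w' s + P * w s) * Real.exp (P * s) ≤ -r s * Real.exp (P * s) :=
      mul_le_mul_of_nonneg_right h3 (Real.exp_pos _).le
    refine h4.trans ?_
    have h5 : Real.exp (P * τ) ≤ Real.exp (P * s) :=
      Real.exp_le_exp.2 (mul_le_mul_of_nonneg_left hsmem.1.le hP)
    nlinarith
  have hrint2 : IntegrableOn (fun s => -Real.exp (P * τ) * r s) (Ioo τ t) :=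
    (hrint.mono_set hsub).const_mul _
  have hmono : (∫ s in Ioo τ t, (w' s + P * w s) * Real.exp (P * s)) ≤
      ∫ s in Ioo τ t, -Real.exp (P * τ) * r s :=
    integral_mono_ae hint hrint2 hDle
  rw [heq] at hmono
  rw [MeasureTheory.integral_const_mul] at hmono
  have hIr : (∫ s in τ..t, r s) = ∫ s in Ioo τ t, r s := by
    rw [intervalIntegral.integral_of_le htI.1, integral_Ioc_eq_integral_Ioo]
  rw [hIr]
  set R : ℝ := ∫ s in Ioo τ t, r s with hR
  have hE : (0:ℝ) < Real.exp (P * t) := Real.exp_pos _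
  rw [hw0, zero_mul, sub_zero] at hmono
  have h6 : w t ≤ -Real.exp (P * τ) * R / Real.exp (P * t) := by
    rw [le_div_iff₀ hE]
    linarith
  refine h6.trans_eq ?_
  rw [show -(P * (t - τ)) = P * τ - P * t by ring, Real.exp_sub]
  field_simp
end
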